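/- The m = n − φ(n) rational functions w_0,…,w_{m−1} ∈ k(X), defined by w_j = u_{0+j}^{c_0} u_{1+j}^{c_1} ⋯ u_{φ(n)+j}^{c_{φ(n)}} (indices of the u's taken mod n), are algebraically independent over k. -/

import Mathlib

open MvPolynomial

/-- The linear form `u_j = Σ_i ε^{ij} x_i`, viewed in the rational function field
`k(x_0,…,x_{n-1})` (the fraction field of the polynomial ring). -/
noncomputable def uForm {k : Type*} [Field k] (n : ℕ) [NeZero n] (ε : k) (j : ZMod n) :
    FractionRing (MvPolynomial (ZMod n) k) :=
  algebraMap (MvPolynomial (ZMod n) k) (FractionRing (MvPolynomial (ZMod n) k))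
    (∑ i : ZMod n, C (ε ^ (i * j).val) * X i)

/-- The rational monomial `w_j = u_j^{c_0} u_{j+1}^{c_1} ⋯ u_{j+φ(n)}^{c_{φ(n)}},`
where `c_0,…,c_{φ(n)}` are the coefficients of the `n`-th cyclotomic polynomial. -/
noncomputable def wMonomial {k : Type*} [Field k] (n : ℕ) [NeZero n] (ε : k) (j : ℕ) :
    FractionRing (MvPolynomial (ZMod n) k) :=
  ∏ i ∈ Finset.range (n.totient + 1),
    uForm n ε ((i : ZMod n) + (j : ZMod n)) ^ ((Polynomial.cyclotomic n ℤ).coeff i)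

open Finset

private lemma zpow_finset_sum {G : Type*} [CommGroup G] (x : G) {α : Type*} (s : Finset α)
    (f : α → ℤ) : x ^ (∑ j ∈ s, f j) = ∏ j ∈ s, x ^ f j := by
  induction s using Finset.cons_induction with
  | empty => simp
  | cons a s ha ih => rw [sum_cons, prod_cons, zpow_add, ih]

/-- The exponent vector of `w_j`: coefficient vector of `t^j · Φ_n(t)`. -/
private noncomputable def vexp {n : ℕ} (j : Fin (n - n.totient)) (i : ZMod n) : ℤ :=
  (Polynomial.X ^ (j : ℕ) * Polynomial.cyclotomic n ℤ).coeff i.val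

/-- Monomials (with integer exponents) in nonzero algebraically independent elements of a
field extension are algebraically independent, provided the exponent vectors are
linearly independent over `ℤ`. -/
theorem monomials_algInd {k F : Type*} [Field k] [Field F] [Algebra k F]
    {ι κ : Type*} [Fintype ι] [Fintype κ]
    (u : ι → F) (hu : AlgebraicIndependent k u) (hu0 : ∀ i, u i ≠ 0)
    (v : κ → ι → ℤ)
    (hv : ∀ a : κ → ℤ, (∀ i, ∑ j, a j * v j i = 0) → ∀ j, a j = 0) :
    AlgebraicIndependent k fun j => ∏ i, u i ^ v j i := by
  classical
  set U : ι → Fˣ := fun i => Units.mk0 (u i) (hu0 i) with hU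
  set M : (ι → ℤ) → Fˣ := fun e => ∏ i, U i ^ e i with hM
  have hval : ∀ e : ι → ℤ, ((M e : Fˣ) : F) = ∏ i, u i ^ e i := by
    intro e
    calc ((M e : Fˣ) : F) = ∏ i, ((U i ^ e i : Fˣ) : F) := map_prod (Units.coeHom F) _ _
    _ = ∏ i, u i ^ e i := by
        refine prod_congr rfl fun i _ => ?_
        rw [Units.val_zpow_eq_zpow_val, hU, Units.val_mk0]
  have hMadd : ∀ e f : ι → ℤ, ((M e : Fˣ) : F) * ((M f : Fˣ) : F) = (M (fun i => e i + f i) : F) := by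
    intro e f
    rw [← Units.val_mul]
    congr 1
    rw [hM, ← prod_mul_distrib]
    exact prod_congr rfl fun i _ => (zpow_add _ _ _).symm
  rw [algebraicIndependent_iff]
  intro p hp
  set E : (κ →₀ ℕ) → ι → ℤ := fun d i => ∑ j, (d j : ℤ) * v j i with hE
  have key1 : ∀ d : κ →₀ ℕ, (∏ j, M (v j) ^ (d j)) = M (E d) := by
    intro d
    calc ∏ j, M (v j) ^ (d j)
        = ∏ j, ∏ i, U i ^ ((d j : ℤ) * v j i) := by
          refine prod_congr rfl fun j _ => ?_
          rw [hM, ← prod_pow]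
          refine prod_congr rfl fun i _ => ?_
          rw [← zpow_natCast (U i ^ v j i), ← zpow_mul, mul_comm]
      _ = ∏ i, ∏ j, U i ^ ((d j : ℤ) * v j i) := prod_comm
      _ = M (E d) := by
          rw [hM]
          exact prod_congr rfl fun i _ => (zpow_finset_sum _ _ _).symm
  have expand : (aeval (fun j => ∏ i, u i ^ v j i) : MvPolynomial κ k →ₐ[k] F) p
      = ∑ d ∈ p.support, algebraMap k F (coeff d p) * ((M (E d)) : F) := by
    conv_lhs => rw [p.as_sum]
    rw [map_sum]
    refine sum_congr rfl fun d _ => ?_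
    rw [aeval_monomial]
    congr 1
    rw [Finsupp.prod_fintype _ _ (fun j => pow_zero _), ← key1]
    calc ∏ j, (∏ i, u i ^ v j i) ^ d j
        = ∏ j, ((M (v j) ^ d j : Fˣ) : F) := prod_congr rfl fun j _ => by
          rw [Units.val_pow_eq_pow_val, hval]
      _ = ((∏ j, M (v j) ^ d j : Fˣ) : F) := by
          exact (map_prod (Units.coeHom F) (fun j => M (v j) ^ d j) univ).symm
  rw [expand] at hp
  set N : ι → ℕ := fun i => p.support.sup fun d => (E d i).natAbs with hN
  have hNn : ∀ d ∈ p.support, ∀ i, 0 ≤ E d i + (N i : ℤ) := by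
    intro d hd i
    have h1 : (E d i).natAbs ≤ N i := Finset.le_sup (f := fun d => (E d i).natAbs) hd
    omega
  have hp2 : ∑ d ∈ p.support, algebraMap k F (coeff d p)
      * ((M (fun i => E d i + (N i : ℤ))) : F) = 0 := by
    have h2 := congrArg (fun z => z * ((M fun i => (N i : ℤ)) : F)) hp
    simp only [zero_mul, sum_mul, mul_assoc, hMadd] at h2
    exact h2
  set D : (κ →₀ ℕ) → (ι →₀ ℕ) :=
    fun d => Finsupp.equivFunOnFinite.symm fun i => (E d i + (N i : ℤ)).toNat with hD
  have hDapp : ∀ d i, D d i = (E d i + (N i : ℤ)).toNat := fun d i => rfl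
  have hmon : ∀ d ∈ p.support, ((M fun i => E d i + (N i : ℤ)) : F)
      = aeval u (monomial (D d) 1) := by
    intro d hd
    rw [aeval_monomial, map_one, one_mul,
      Finsupp.prod_fintype _ _ (fun i => pow_zero _), hval]
    refine prod_congr rfl fun i _ => ?_
    rw [hDapp, ← zpow_natCast, Int.toNat_of_nonneg (hNn d hd i)]
  have hq : aeval u (∑ d ∈ p.support, monomial (D d) (coeff d p)) = 0 := by
    rw [map_sum, ← hp2]
    refine sum_congr rfl fun d hd => ?_
    rw [aeval_monomial, hmon d hd, aeval_monomial, map_one, one_mul]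
  have q0 : (∑ d ∈ p.support, monomial (D d) (coeff d p)) = 0 := by
    apply hu
    rwa [map_zero]
  have hDinj : ∀ d ∈ p.support, ∀ d' ∈ p.support, D d = D d' → d = d' := by
    intro d hd d' hd' hDd
    have hEeq : ∀ i, E d i = E d' i := by
      intro i
      have e1 : (E d i + (N i : ℤ)).toNat = (E d' i + (N i : ℤ)).toNat := by
        rw [← hDapp, ← hDapp, hDd]
      have h1 := hNn d hd i
      have h2 := hNn d' hd' i
      omega
    have hz := hv (fun j => (d j : ℤ) - (d' j : ℤ)) ?_
    · ext j
      have := hz j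
      omega
    · intro i
      have h3 := hEeq i
      simp only [hE] at h3
      simp only [sub_mul]
      rw [Finset.sum_sub_distrib, h3, sub_self]
  have hcoeff : ∀ d ∈ p.support, coeff d p = 0 := by
    intro d hd
    have h4 := congrArg (coeff (D d)) q0
    rw [MvPolynomial.coeff_sum, coeff_zero, Finset.sum_eq_single d] at h4
    · rwa [coeff_monomial, if_pos rfl] at h4
    · intro d' hd' hne
      rw [coeff_monomial, if_neg]
      intro hDd
      exact hne (hDinj d' hd' d hd hDd)
    · intro hds
      exact absurd hd hds
  ext d
  rw [coeff_zero]
  by_cases hd : d ∈ p.support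
  · exact hcoeff d hd
  · exact notMem_support_iff.mp hd

section
variable {k : Type*} [Field k] {n : ℕ} [NeZero n] {ε : k}

omit [NeZero n] in
private lemma eps_pow_natCast (hε1 : ε ^ n = 1) (t : ℕ) :
    ε ^ ((t : ZMod n)).val = ε ^ t := by
  rw [ZMod.val_natCast]
  conv_rhs => rw [← Nat.mod_add_div t n, pow_add, pow_mul, hε1, one_pow, mul_one]

private lemma eps_pow_add (hε1 : ε ^ n = 1) (a b : ZMod n) :
    ε ^ a.val * ε ^ b.val = ε ^ (a + b).val := by
  have h : ((a.val + b.val : ℕ) : ZMod n) = a + b := by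
    push_cast
    rw [ZMod.natCast_val, ZMod.natCast_val, ZMod.cast_id, ZMod.cast_id]
  rw [← h, eps_pow_natCast hε1, pow_add]

private lemma sum_eps (hε : IsPrimitiveRoot ε n) (d : ZMod n) :
    ∑ i : ZMod n, ε ^ (i * d).val = if d = 0 then (n : k) else 0 := by
  split_ifs with hd
  · subst hd
    simp [ZMod.val_zero]
  · have hmul : ∀ i : ZMod n, ε ^ (i * d).val = (ε ^ d.val) ^ i.val := by
      intro i
      have h : ((d.val * i.val : ℕ) : ZMod n) = i * d := by
        push_cast
        rw [ZMod.natCast_val, ZMod.natCast_val, ZMod.cast_id, ZMod.cast_id, mul_comm]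
      rw [← h, eps_pow_natCast hε.pow_eq_one, pow_mul]
    simp only [hmul]
    have hsum : ∑ i : ZMod n, (ε ^ d.val) ^ i.val = ∑ t ∈ range n, (ε ^ d.val) ^ t := by
      refine Finset.sum_nbij' (fun i : ZMod n => i.val) (fun t : ℕ => (t : ZMod n))
        (fun i _ => mem_range.mpr (ZMod.val_lt i)) (fun t _ => mem_univ _)
        (fun i _ => (ZMod.natCast_val i).trans (ZMod.cast_id _ _))
        (fun t ht => ZMod.val_natCast_of_lt (mem_range.mp ht))
        (fun i _ => rfl)
    rw [hsum]
    have hd0 : d.val ≠ 0 := fun h0 => hd (by rwa [ZMod.val_eq_zero] at h0)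
    have hx1 : ε ^ d.val ≠ 1 := by
      intro h
      rw [hε.pow_eq_one_iff_dvd] at h
      exact hd0 (Nat.eq_zero_of_dvd_of_lt h (ZMod.val_lt d))
    have hxn : (ε ^ d.val) ^ n = 1 := by
      rw [← pow_mul, mul_comm, pow_mul, hε.pow_eq_one, one_pow]
    have hgeom := geom_sum_mul (ε ^ d.val) n
    rw [hxn, sub_self] at hgeom
    rcases mul_eq_zero.mp hgeom with h | h
    · exact h
    · exact absurd (sub_eq_zero.mp h) hx1

private lemma uPoly_algInd [CharZero k] (hε : IsPrimitiveRoot ε n) :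
    AlgebraicIndependent k (fun j : ZMod n =>
      (∑ i : ZMod n, C (ε ^ (i * j).val) * X i : MvPolynomial (ZMod n) k)) := by
  set P : ZMod n → MvPolynomial (ZMod n) k :=
    fun j => ∑ i : ZMod n, C (ε ^ (i * j).val) * X i with hP
  set Q : ZMod n → MvPolynomial (ZMod n) k :=
    fun i => ∑ l : ZMod n, C ((n : k)⁻¹ * ε ^ (-(i * l) : ZMod n).val) * X l with hQ
  have hnk : (n : k) ≠ 0 := Nat.cast_ne_zero.mpr (NeZero.ne n)
  have key : ∀ j, aeval Q (P j) = X j := by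
    intro j
    rw [hP]
    rw [map_sum]
    have hPi : ∀ i : ZMod n, aeval Q (C (ε ^ (i * j).val) * X i)
        = ∑ l : ZMod n, C ((n : k)⁻¹ * ε ^ (i * (j - l)).val) * X l := by
      intro i
      rw [map_mul, aeval_C, aeval_X, algebraMap_eq, hQ, Finset.mul_sum]
      refine sum_congr rfl fun l _ => ?_
      rw [← mul_assoc, ← map_mul]
      congr 2
      rw [mul_comm ((n : k)⁻¹) _, ← mul_assoc, eps_pow_add hε.pow_eq_one, mul_comm]
      congr 2
      ring
    rw [Finset.sum_congr rfl fun i _ => hPi i, Finset.sum_comm]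
    have hterm : ∀ l : ZMod n, ∑ i : ZMod n, C ((n : k)⁻¹ * ε ^ (i * (j - l)).val) * X l
        = if l = j then (X l : MvPolynomial (ZMod n) k) else 0 := by
      intro l
      rw [← Finset.sum_mul, ← map_sum (C : k →+* MvPolynomial (ZMod n) k), ← Finset.mul_sum,
        sum_eps hε (j - l)]
      by_cases hl : l = j
      · subst hl
        rw [if_pos rfl, sub_self, if_pos rfl, inv_mul_cancel₀ hnk, map_one, one_mul]
      · rw [if_neg hl, if_neg (fun h => hl (sub_eq_zero.mp h).symm), mul_zero, map_zero, zero_mul]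
    rw [Finset.sum_congr rfl fun l _ => hterm l, Finset.sum_ite_eq' univ j
      (fun l => (X l : MvPolynomial (ZMod n) k)), if_pos (mem_univ j)]
  have hid : ∀ p : MvPolynomial (ZMod n) k, aeval Q (aeval P p) = p := by
    intro p
    have hc : (aeval Q).comp (aeval P) = AlgHom.id k (MvPolynomial (ZMod n) k) := by
      apply algHom_ext
      intro j
      rw [AlgHom.comp_apply, aeval_X, key j, AlgHom.id_apply]
    calc aeval Q (aeval P p) = ((aeval Q).comp (aeval P)) p := rfl
    _ = p := by rw [hc, AlgHom.id_apply]
  rw [algebraicIndependent_iff]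
  intro p hp0
  have h5 := congrArg (aeval Q) hp0
  rwa [hid, map_zero] at h5
end

private lemma shifted_cyclotomic_indep (n : ℕ) [NeZero n]
    (a : Fin (n - n.totient) → ℤ)
    (h : ∀ i : ZMod n, ∑ j, a j * vexp j i = 0) :
    ∀ j, a j = 0 := by
  simp only [vexp] at h
  set Φ := Polynomial.cyclotomic n ℤ with hΦ
  have hφ : Φ.natDegree = n.totient := Polynomial.natDegree_cyclotomic n ℤ
  have hφle : n.totient ≤ n := Nat.totient_le n
  have hcoeff : ∀ t : ℕ,
      ((∑ j : Fin (n - n.totient), Polynomial.C (a j) * Polynomial.X ^ (j : ℕ)) * Φ).coeff t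
      = ∑ j : Fin (n - n.totient), a j * (Polynomial.X ^ (j : ℕ) * Φ).coeff t := by
    intro t
    rw [Finset.sum_mul, Polynomial.finset_sum_coeff]
    refine Finset.sum_congr rfl fun j _ => ?_
    rw [mul_assoc, Polynomial.coeff_C_mul]
  have hdeg : ∀ j : Fin (n - n.totient), (Polynomial.X ^ (j : ℕ) * Φ).natDegree < n := by
    intro j
    have h1 : (Polynomial.X ^ (j : ℕ) * Φ).natDegree ≤ (j : ℕ) + n.totient := by
      refine le_trans (Polynomial.natDegree_mul_le) ?_
      rw [Polynomial.natDegree_X_pow, hφ]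
    have := j.isLt
    omega
  have hq : (∑ j : Fin (n - n.totient), Polynomial.C (a j) * Polynomial.X ^ (j : ℕ)) * Φ = 0 := by
    ext t
    rw [Polynomial.coeff_zero, hcoeff]
    by_cases ht : t < n
    · have h2 := h (t : ZMod n)
      rwa [ZMod.val_natCast_of_lt ht] at h2
    · refine Finset.sum_eq_zero fun j _ => ?_
      rw [Polynomial.coeff_eq_zero_of_natDegree_lt (lt_of_lt_of_le (hdeg j) (not_lt.mp ht)),
        mul_zero]
  have hs : (∑ j : Fin (n - n.totient), Polynomial.C (a j) * Polynomial.X ^ (j : ℕ)) = 0 := by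
    rcases mul_eq_zero.mp hq with h1 | h1
    · exact h1
    · exact absurd h1 (Polynomial.cyclotomic_ne_zero n ℤ)
  intro j
  have h3 := congrArg (fun p => Polynomial.coeff p (j : ℕ)) hs
  simp only [Polynomial.finset_sum_coeff, Polynomial.coeff_C_mul, Polynomial.coeff_X_pow,
    Polynomial.coeff_zero] at h3
  rw [Finset.sum_eq_single j] at h3
  · rwa [if_pos rfl, mul_one] at h3
  · intro j' _ hne
    rw [if_neg (fun hh => hne (Fin.ext hh.symm)), mul_zero]
  · intro hj
    exact absurd (Finset.mem_univ j) hj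

private lemma wMonomial_eq {k : Type*} [Field k] (n : ℕ) [NeZero n] (ε : k)
    (j : Fin (n - n.totient)) :
    wMonomial n ε (j : ℕ) = ∏ i : ZMod n, uForm n ε i ^ vexp j i := by
  simp only [vexp]
  have hφle : n.totient ≤ n := Nat.totient_le n
  have hjm : (j : ℕ) < n - n.totient := j.isLt
  have hφ : (Polynomial.cyclotomic n ℤ).natDegree = n.totient :=
    Polynomial.natDegree_cyclotomic n ℤ
  set e : ℕ → ZMod n := fun l => (l : ZMod n) + ((j : ℕ) : ZMod n) with he
  have heval : ∀ l, l < n.totient + 1 → (e l).val = l + (j : ℕ) := by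
    intro l hl
    have h1 : e l = ((l + (j : ℕ) : ℕ) : ZMod n) := by rw [he]; push_cast; ring
    rw [h1, ZMod.val_natCast_of_lt (by omega)]
  have hcoeffe : ∀ l, l < n.totient + 1 →
      (Polynomial.X ^ (j : ℕ) * Polynomial.cyclotomic n ℤ).coeff (e l).val
      = (Polynomial.cyclotomic n ℤ).coeff l := by
    intro l hl
    rw [heval l hl, Polynomial.coeff_X_pow_mul]
  have hinj : ∀ l1 ∈ Finset.range (n.totient + 1), ∀ l2 ∈ Finset.range (n.totient + 1),
      e l1 = e l2 → l1 = l2 := by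
    intro l1 h1 l2 h2 hee
    have := heval l1 (Finset.mem_range.mp h1)
    have := heval l2 (Finset.mem_range.mp h2)
    have : (e l1).val = (e l2).val := by rw [hee]
    omega
  have hout : ∀ i : ZMod n, i ∉ (Finset.range (n.totient + 1)).image e →
      (Polynomial.X ^ (j : ℕ) * Polynomial.cyclotomic n ℤ).coeff i.val = 0 := by
    intro i hi
    by_contra hne
    rw [mul_comm, Polynomial.coeff_mul_X_pow'] at hne
    have hle : (j : ℕ) ≤ i.val := by
      by_contra hlt
      rw [if_neg hlt] at hne
      exact hne rfl
    rw [if_pos hle] at hne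
    have hub : i.val - (j : ℕ) ≤ n.totient := by
      by_contra hgt
      exact hne (Polynomial.coeff_eq_zero_of_natDegree_lt (by omega))
    apply hi
    refine Finset.mem_image.mpr ⟨i.val - (j : ℕ), Finset.mem_range.mpr (by omega), ?_⟩
    have h6 : e (i.val - (j : ℕ)) = ((i.val - (j : ℕ) + (j : ℕ) : ℕ) : ZMod n) := by
      simp only [he]; push_cast; ring
    rw [h6, Nat.sub_add_cancel hle, ZMod.natCast_val, ZMod.cast_id]
  rw [wMonomial]
  symm
  rw [← Finset.prod_subset (Finset.subset_univ ((Finset.range (n.totient + 1)).image e))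
    (fun i _ hi => by rw [hout i hi, zpow_zero]), Finset.prod_image hinj]
  refine Finset.prod_congr rfl fun l hl => ?_
  rw [hcoeffe l (Finset.mem_range.mp hl)]

set_option maxHeartbeats 1000000 in
/-- The `m = n - φ(n)` rational functions `w_0,…,w_{m-1}` are
algebraically independent over `k`. -/
theorem stmt_4 {k : Type*} [Field k] [CharZero k] (n : ℕ) (hn : 3 ≤ n) [NeZero n]
    (ε : k) (hε : IsPrimitiveRoot ε n) :
    AlgebraicIndependent k (fun j : Fin (n - n.totient) => wMonomial n ε (j : ℕ)) := by
  set F := FractionRing (MvPolynomial (ZMod n) k)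
  have hP := uPoly_algInd (n := n) hε
  have hmapinj : Function.Injective
      (algebraMap (MvPolynomial (ZMod n) k) F) :=
    IsFractionRing.injective (MvPolynomial (ZMod n) k) F
  have halg : AlgebraicIndependent k (uForm n ε) := by
    have hfeq : uForm n ε = (IsScalarTower.toAlgHom k (MvPolynomial (ZMod n) k) F) ∘
        (fun j : ZMod n =>
          (∑ i : ZMod n, C (ε ^ (i * j).val) * X i : MvPolynomial (ZMod n) k)) := by
      funext j
      simp only [Function.comp_apply, IsScalarTower.coe_toAlgHom', uForm]
      rfl
    rw [hfeq]
    exact ((IsScalarTower.toAlgHom k (MvPolynomial (ZMod n) k) F).algebraicIndependent_iff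
      (by exact hmapinj)).mpr hP
  have hu0 : ∀ i : ZMod n, uForm n ε i ≠ 0 := by
    intro i h0
    have h1 : aeval (uForm n ε) (X i : MvPolynomial (ZMod n) k)
        = aeval (uForm n ε) (0 : MvPolynomial (ZMod n) k) := by
      rw [aeval_X, map_zero, h0]
    have h2 := halg h1
    exact MvPolynomial.X_ne_zero i h2
  have hmain := monomials_algInd (uForm n ε) halg hu0 vexp (shifted_cyclotomic_indep n)
  have heq : (fun j : Fin (n - n.totient) => wMonomial n ε (j : ℕ))
      = fun j : Fin (n - n.totient) => ∏ i : ZMod n, uForm n ε i ^ vexp j i :=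
    funext fun j => wMonomial_eq n ε j
  rw [heq]
  exact hmain
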